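/- Let p_t be the periodic heat kernel on [−1,1] defined by p_t(x,y) = Σ_{n∈ℤ} G_t(x−y+2n) with G the Gaussian heat kernel. There exists a finite constant C such that for all x, y ∈ [−1,1] and all t > 0, ∫_{−1}^{1} |p_t(x,w) − p_t(y,w)|² dw ≤ C |x−y| / min(t, √t). -/

import Mathlib

open Real MeasureTheory intervalIntegral

open Set Filter

/-- The free-space heat kernel. -/
noncomputable def G (τ a : ℝ) : ℝ :=
  (Real.sqrt (4 * Real.pi * τ))⁻¹ * Real.exp (-a ^ 2 / (4 * τ))

/-- The periodic heat kernel on the torus `[-1,1]`. -/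
noncomputable def p (t x y : ℝ) : ℝ := ∑' n : ℤ, G t (x - y + 2 * (n : ℝ))

noncomputable def Ks (c x w : ℝ) : ℝ := ∑' n : ℤ, Real.exp (-(x - w + 2 * (n : ℝ)) ^ 2 / c)

lemma summable_nat_exp_sq {c : ℝ} (hc : 0 < c) (a : ℝ) :
    Summable (fun n : ℕ => Real.exp (-(a + 2 * (n : ℝ)) ^ 2 / c)) := by
  have hr0 : (0:ℝ) ≤ Real.exp (-4 / c) := (Real.exp_pos _).le
  have hr1 : Real.exp (-4 / c) < 1 := by
    rw [Real.exp_lt_one_iff]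
    exact div_neg_of_neg_of_pos (by norm_num) hc
  refine Summable.of_nonneg_of_le (fun n => (Real.exp_pos _).le)
    (fun n => ?_) (((summable_geometric_of_lt_one hr0 hr1)).mul_left (Real.exp ((a^2 + 2) / c)))
  rw [← Real.exp_nat_mul, ← Real.exp_add]
  apply Real.exp_le_exp.2
  have h2 : (0:ℝ) ≤ (n:ℝ) := Nat.cast_nonneg n
  have hrw : (a^2+2)/c + (n:ℝ) * (-4/c) = (a^2 + 2 - 4*(n:ℝ))/c := by ring
  rw [hrw, div_le_div_iff₀ hc hc]
  nlinarith [sq_nonneg (a + (n:ℝ)), sq_nonneg ((n:ℝ) - 1), sq_nonneg a, hc.le]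

lemma summable_exp_sq {c : ℝ} (hc : 0 < c) (a : ℝ) :
    Summable (fun n : ℤ => Real.exp (-(a + 2 * (n : ℝ)) ^ 2 / c)) := by
  apply Summable.of_nat_of_neg
  · exact (summable_nat_exp_sq hc a).congr (fun n => by norm_num)
  · refine ((summable_nat_exp_sq hc (-a)).congr (fun n => ?_))
    push_cast
    rw [show -(-a + 2 * (n:ℝ))^2 = -(a + 2 * (-(n:ℝ)))^2 by ring]

lemma summable_G {t : ℝ} (ht : 0 < t) (a : ℝ) :
    Summable (fun n : ℤ => G t (a + 2 * (n : ℝ))) := by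
  unfold G
  exact (summable_exp_sq (by linarith : (0:ℝ) < 4*t) a).mul_left _

lemma geo_aux {c : ℝ} (hc : 0 < c) :
    Real.exp 1 * (Real.exp (-4 / Real.sqrt c) * (1 - Real.exp (-4 / Real.sqrt c))⁻¹)
      ≤ Real.sqrt c := by
  set s := Real.sqrt c with hs
  have hs0 : 0 < s := Real.sqrt_pos.2 hc
  set r := Real.exp (-4 / s) with hr
  have hrpos : 0 < r := Real.exp_pos _
  have hr1 : r < 1 := by
    rw [hr, Real.exp_lt_one_iff]
    exact div_neg_of_neg_of_pos (by norm_num) hs0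
  have hu : (0:ℝ) < 4 / s := by positivity
  have key : 1 - r ≥ (4 / s) * r := by
    have h1 : 4 / s + 1 ≤ Real.exp (4 / s) := Real.add_one_le_exp _
    have h2 : Real.exp (4 / s) * r = 1 := by
      rw [hr, ← Real.exp_add]
      ring_nf
      simp
    nlinarith
  have h3 : (1 - r)⁻¹ ≤ ((4 / s) * r)⁻¹ := by
    apply inv_anti₀ (by positivity) key
  have h4 : r * (1 - r)⁻¹ ≤ s / 4 := by
    calc r * (1 - r)⁻¹ ≤ r * ((4 / s) * r)⁻¹ := by
          exact mul_le_mul_of_nonneg_left h3 hrpos.le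
      _ = s / 4 := by
          field_simp
  have he : Real.exp 1 ≤ 4 := by
    have := Real.exp_one_lt_d9
    linarith
  calc Real.exp 1 * (r * (1 - r)⁻¹) ≤ 4 * (s / 4) := by
        apply mul_le_mul he h4 (mul_nonneg hrpos.le (inv_nonneg.2 (by linarith))) (by norm_num)
    _ = s := by ring

lemma tsum_exp_sq_le {c a : ℝ} (hc : 0 < c) (ha : |a| ≤ 2) :
    (∑' n : ℤ, Real.exp (-(a + 2 * (n : ℝ)) ^ 2 / c)) ≤ 3 + 2 * Real.sqrt c := by
  set s := Real.sqrt c with hs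
  have hs0 : 0 < s := Real.sqrt_pos.2 hc
  have hcs : s * s = c := Real.mul_self_sqrt hc.le
  set r := Real.exp (-4 / s) with hr
  have hrpos : 0 < r := Real.exp_pos _
  have hr1 : r < 1 := by
    rw [hr, Real.exp_lt_one_iff]; exact div_neg_of_neg_of_pos (by norm_num) hs0
  have ha1 : -2 ≤ a := neg_le_of_abs_le ha
  have ha2 : a ≤ 2 := le_of_abs_le ha
  -- generic bound  exp (-z^2/c) ≤ exp 1 * r^(m+1)  when  (2*(m+1))^2 ≤ z^2
  have hterm : ∀ (m : ℕ) (z : ℝ), (2*((m:ℝ)+1))^2 ≤ z^2 →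
      Real.exp (-z ^ 2 / c) ≤ Real.exp 1 * r ^ (m + 1) := by
    intro m z hz
    rw [hr, ← Real.exp_nat_mul, ← Real.exp_add]
    apply Real.exp_le_exp.2
    have hm : (0:ℝ) ≤ (m:ℝ) + 1 := by positivity
    have h1 : -z^2/c ≤ -(2*((m:ℝ)+1))^2/c := by
      rw [div_le_div_iff₀ hc hc]
      nlinarith
    have h2 : -(2*((m:ℝ)+1))^2/c ≤ 1 + (↑(m+1)) * (-4/s) := by
      push_cast
      rw [div_le_iff₀ hc, ← hcs]
      have hexp : ((m:ℝ)+1) * (-4/s) * (s*s) = -4*((m:ℝ)+1)*s := by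
        field_simp
      nlinarith [sq_nonneg (2*((m:ℝ)+1) - s), sq_nonneg s]
    calc -z^2/c ≤ -(2*((m:ℝ)+1))^2/c := h1
      _ ≤ 1 + (↑(m+1)) * (-4/s) := h2
  -- geometric series facts
  have hgeoS : Summable (fun n : ℕ => Real.exp 1 * r ^ (n+1)) :=
    (((summable_geometric_of_lt_one hrpos.le hr1).mul_right r).mul_left (Real.exp 1)).congr
      (fun n => by rw [pow_succ])
  have hgeoVal : (∑' n : ℕ, Real.exp 1 * r ^ (n+1)) ≤ s := by
    have hv : (∑' n : ℕ, Real.exp 1 * r ^ (n+1)) = Real.exp 1 * (r * (1-r)⁻¹) := by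
      rw [tsum_mul_left]
      congr 1
      have : ∀ n : ℕ, r ^ (n+1) = r * r ^ n := fun n => by rw [pow_succ]; ring
      rw [tsum_congr this, tsum_mul_left, tsum_geometric_of_lt_one hrpos.le hr1]
    rw [hv]
    exact geo_aux hc
  set f : ℤ → ℝ := fun n => Real.exp (-(a + 2 * (n : ℝ)) ^ 2 / c) with hf
  have hposS : Summable (fun n : ℕ => f n) :=
    (summable_nat_exp_sq hc a).congr (fun n => by simp [hf])
  have hnegS : Summable (fun n : ℕ => f (-((n : ℤ)+1))) := by
    refine (summable_nat_exp_sq hc (2-a)).congr (fun n => ?_)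
    simp only [hf]
    push_cast
    congr 1
    ring
  rw [tsum_of_nat_of_neg_add_one hposS hnegS]
  have hshift : Summable (fun n : ℕ => f (↑(n+1))) :=
    (summable_nat_add_iff (f := fun m : ℕ => f ↑m) 1).2 hposS
  have hshift2 : Summable (fun n : ℕ => f (↑(n+2))) :=
    (summable_nat_add_iff (f := fun m : ℕ => f ↑m) 2).2 hposS
  have hnegshift : Summable (fun n : ℕ => f (-((↑(n+1) : ℤ)+1))) :=
    (summable_nat_add_iff (f := fun m : ℕ => f (-((m : ℤ)+1))) 1).2 hnegS
  have e1 : ∀ b : ℝ, Real.exp (-b ^ 2 / c) ≤ 1 := by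
    intro b
    rw [Real.exp_le_one_iff]
    apply div_nonpos_of_nonpos_of_nonneg (neg_nonpos.2 (sq_nonneg b)) hc.le
  -- positive side
  have hnat : (∑' n : ℕ, f n) ≤ 2 + s := by
    rw [hposS.tsum_eq_zero_add]
    have h2 : (∑' n : ℕ, f (↑(n+1))) = f 1 + ∑' n : ℕ, f (↑(n+2)) := by
      rw [hshift.tsum_eq_zero_add]
      have hc2 : ∀ n : ℕ, f ↑(n+1+1) = f ↑(n+2) := fun n => by norm_num [add_assoc]
      rw [tsum_congr hc2]
      norm_num
    have h0 : f 0 ≤ 1 := by simpa [hf] using e1 a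
    have h1 : f 1 ≤ 1 := by simpa [hf] using e1 (a+2)
    have h3 : (∑' n : ℕ, f (↑(n+2))) ≤ ∑' n : ℕ, Real.exp 1 * r ^ (n+1) := by
      refine Summable.tsum_le_tsum (fun n => ?_) hshift2 hgeoS
      have hz : (2*((n:ℝ)+1))^2 ≤ (a + 2*(((n:ℕ)+2:ℕ) : ℝ))^2 := by
        push_cast
        nlinarith [(Nat.cast_nonneg n : (0:ℝ) ≤ (n:ℝ)), ha1]
      simpa [hf] using hterm n _ hz
    have := h3.trans hgeoVal
    rw [h2]
    simp only [Nat.cast_zero] at *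
    linarith
  -- negative side
  have hneg : (∑' n : ℕ, f (-((n : ℤ)+1))) ≤ 1 + s := by
    rw [hnegS.tsum_eq_zero_add]
    have h0 : f (-1) ≤ 1 := by simpa [hf, sub_eq_add_neg] using e1 (a-2)
    have h3 : (∑' n : ℕ, f (-((↑(n+1) : ℤ)+1))) ≤ ∑' n : ℕ, Real.exp 1 * r ^ (n+1) := by
      refine Summable.tsum_le_tsum (fun n => ?_) hnegshift hgeoS
      have hz : (2*((n:ℝ)+1))^2 ≤ (a + 2*((-((↑(n+1) : ℤ)+1) : ℤ) : ℝ))^2 := by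
        push_cast
        nlinarith [(Nat.cast_nonneg n : (0:ℝ) ≤ (n:ℝ)), ha2]
      simpa [hf] using hterm n _ hz
    have := h3.trans hgeoVal
    push_cast at *
    linarith
  linarith

lemma measurable_partial (c x : ℝ) (s : Finset ℤ) :
    Measurable (fun w => ∑ n ∈ s, Real.exp (-(x - w + 2 * (n : ℝ)) ^ 2 / c)) := by
  apply Finset.measurable_sum
  intro n _
  have : Continuous (fun w : ℝ => Real.exp (-(x - w + 2 * (n : ℝ)) ^ 2 / c)) := by
    continuity
  exact this.measurable

lemma tendsto_partial_Ks {c : ℝ} (hc : 0 < c) (x w : ℝ) :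
    Filter.Tendsto (fun k : ℕ => ∑ n ∈ Finset.Icc (-(k : ℤ)) (k : ℤ),
      Real.exp (-(x - w + 2 * (n : ℝ)) ^ 2 / c)) atTop (nhds (Ks c x w)) := by
  have hs := (summable_exp_sq hc (x - w)).hasSum
  have hT : Filter.Tendsto (fun k : ℕ => Finset.Icc (-(k : ℤ)) (k : ℤ)) atTop atTop := by
    apply Filter.tendsto_atTop_finset_of_monotone
    · intro i j hij
      apply Finset.Icc_subset_Icc
      · exact neg_le_neg (by exact_mod_cast hij)
      · exact_mod_cast hij
    · intro n
      exact ⟨n.natAbs, by rw [Finset.mem_Icc, ← Int.abs_eq_natAbs]; exact ⟨neg_abs_le n, le_abs_self n⟩⟩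
  exact hs.comp hT

lemma measurable_Ks {c : ℝ} (hc : 0 < c) (x : ℝ) : Measurable (fun w => Ks c x w) := by
  apply measurable_of_tendsto_metrizable' (f := fun k : ℕ => fun w => ∑ n ∈ Finset.Icc (-(k : ℤ)) (k : ℤ),
      Real.exp (-(x - w + 2 * (n : ℝ)) ^ 2 / c)) atTop
  · exact fun k => measurable_partial c x _
  · rw [tendsto_pi_nhds]
    exact fun w => tendsto_partial_Ks hc x w

lemma p_eq (t x w : ℝ) : p t x w = (Real.sqrt (4 * Real.pi * t))⁻¹ * Ks (4 * t) x w := by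
  unfold p G Ks
  rw [← tsum_mul_left]

lemma Ks_nonneg (c x w : ℝ) : 0 ≤ Ks c x w := tsum_nonneg (fun n => (Real.exp_pos _).le)

lemma p_nonneg (t x w : ℝ) : 0 ≤ p t x w :=
  tsum_nonneg (fun n => mul_nonneg (inv_nonneg.2 (Real.sqrt_nonneg _)) (Real.exp_pos _).le)

lemma Ks_le {c x w : ℝ} (hc : 0 < c) (hxw : |x - w| ≤ 2) : Ks c x w ≤ 3 + 2 * Real.sqrt c :=
  tsum_exp_sq_le hc hxw

lemma p_le {t x w : ℝ} (ht : 0 < t) (hxw : |x - w| ≤ 2) : p t x w ≤ 2 + 2 / Real.sqrt t := by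
  rw [p_eq]
  have h4 : (0:ℝ) < 4 * t := by linarith
  have hKs := Ks_le h4 hxw
  have hst : 0 < Real.sqrt t := Real.sqrt_pos.2 ht
  have h4t : Real.sqrt (4 * t) = 2 * Real.sqrt t := by
    rw [show (4:ℝ) * t = 2 ^ 2 * t by ring, Real.sqrt_mul (by positivity), Real.sqrt_sq (by norm_num)]
  have hsq : 2 * Real.sqrt t ≤ Real.sqrt (4 * Real.pi * t) := by
    rw [← h4t]
    apply Real.sqrt_le_sqrt
    nlinarith [Real.pi_gt_three]
  have hinv : (Real.sqrt (4 * Real.pi * t))⁻¹ ≤ (2 * Real.sqrt t)⁻¹ :=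
    inv_anti₀ (by positivity) hsq
  calc (Real.sqrt (4 * Real.pi * t))⁻¹ * Ks (4 * t) x w
      ≤ (2 * Real.sqrt t)⁻¹ * (3 + 2 * Real.sqrt (4 * t)) := by
        apply mul_le_mul hinv hKs (Ks_nonneg _ _ _) (by positivity)
    _ = (2 * Real.sqrt t)⁻¹ * (3 + 4 * Real.sqrt t) := by rw [h4t]; ring
    _ ≤ 2 + 2 / Real.sqrt t := by
        rw [inv_mul_eq_div, div_le_iff₀ (by positivity)]
        have h5 : (2 + 2 / Real.sqrt t) * (2 * Real.sqrt t) = 4 * Real.sqrt t + 4 := by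
          field_simp; ring
        rw [h5]
        linarith

lemma hasDerivAt_G {t : ℝ} (a : ℝ) :
    HasDerivAt (fun s => G t s)
      ((Real.sqrt (4 * Real.pi * t))⁻¹ * (Real.exp (-a ^ 2 / (4 * t)) * (-(2 * a) / (4 * t)))) a := by
  have h1 : HasDerivAt (fun s : ℝ => -s ^ 2 / (4 * t)) (-(2 * a) / (4 * t)) a := by
    have h0 : HasDerivAt (fun s : ℝ => s ^ 2) (2 * a) a := by
      simpa using hasDerivAt_pow 2 a
    simpa using (h0.neg).div_const (4 * t)
  exact h1.exp.const_mul _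

lemma deriv_G_bound {t a b s : ℝ} (ht : 0 < t) (hab : (a - b) ^ 2 ≤ t) (hs : s ∈ Set.uIcc a b) :
    (Real.sqrt (4 * Real.pi * t))⁻¹ * (Real.exp (-s ^ 2 / (4 * t)) * (2 * |s|) / (4 * t))
      ≤ (1 / t) * Real.exp (-a ^ 2 / (16 * t)) := by
  have h2t : (0:ℝ) < 2 * t := by linarith
  set v := Real.sqrt (2 * t) with hv
  have hv0 : 0 < v := Real.sqrt_pos.2 h2t
  have hv2 : v ^ 2 = 2 * t := Real.sq_sqrt h2t.le
  -- (i) |s| ≤ v * exp (s^2/(8t))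
  have hi : |s| ≤ v * Real.exp (s ^ 2 / (8 * t)) := by
    have hexp : 1 + s ^ 2 / (8 * t) ≤ Real.exp (s ^ 2 / (8 * t)) := by
      have := Real.add_one_le_exp (s ^ 2 / (8 * t))
      linarith
    have key : |s| ≤ v * (1 + s ^ 2 / (8 * t)) := by
      have h8 : (0:ℝ) < 8 * t := by linarith
      rw [← mul_le_mul_iff_of_pos_right h8]
      have hrhs : v * (1 + s ^ 2 / (8 * t)) * (8 * t) = v * (8 * t) + v * s ^ 2 := by
        field_simp
      rw [hrhs]
      nlinarith [mul_nonneg (sq_nonneg (|s| - 2 * v)) hv0.le, sq_abs s, hv2, hv0.le]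
    calc |s| ≤ v * (1 + s ^ 2 / (8 * t)) := key
      _ ≤ v * Real.exp (s ^ 2 / (8 * t)) := by
          exact mul_le_mul_of_nonneg_left hexp hv0.le
  -- (ii) s in segment: -s^2/(8t) ≤ 1/8 - a^2/(16t)
  have hsa : (s - a) ^ 2 ≤ (a - b) ^ 2 := by
    rcases le_total a b with h | h
    · rw [Set.uIcc_of_le h] at hs
      obtain ⟨h1, h2⟩ := hs
      nlinarith
    · rw [Set.uIcc_of_ge h] at hs
      obtain ⟨h1, h2⟩ := hs
      nlinarith
  have hii : Real.exp (-s ^ 2 / (8 * t)) ≤ Real.exp (1/8) * Real.exp (-a ^ 2 / (16 * t)) := by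
    rw [← Real.exp_add]
    apply Real.exp_le_exp.2
    have ha2 : a ^ 2 ≤ 2 * s ^ 2 + 2 * t := by nlinarith [sq_nonneg (a - 2 * s)]
    rw [div_add_div _ _ (by norm_num : (8:ℝ) ≠ 0) (by positivity : (16 * t) ≠ 0),
      div_le_div_iff₀ (by positivity) (by positivity)]
    nlinarith
  -- (iii) |s| * exp(-s^2/(4t)) ≤ v * exp(-s^2/(8t))
  have hiii : |s| * Real.exp (-s ^ 2 / (4 * t)) ≤ v * Real.exp (-s ^ 2 / (8 * t)) := by
    have h := mul_le_mul_of_nonneg_right hi (Real.exp_pos (-s ^ 2 / (4 * t))).le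
    calc |s| * Real.exp (-s ^ 2 / (4 * t))
        ≤ v * Real.exp (s ^ 2 / (8 * t)) * Real.exp (-s ^ 2 / (4 * t)) := h
      _ = v * Real.exp (-s ^ 2 / (8 * t)) := by
          rw [mul_assoc, ← Real.exp_add]
          congr 2
          field_simp
          ring
  -- coefficient bound
  have hpisqrt : (0:ℝ) < Real.sqrt (4 * Real.pi * t) :=
    Real.sqrt_pos.2 (by positivity)
  have hcoef : Real.exp (1/8 : ℝ) * v ≤ 2 * Real.sqrt (4 * Real.pi * t) := by
    have he : Real.exp (1/8 : ℝ) ≤ 3 := by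
      have h1 : Real.exp (1/8 : ℝ) ≤ Real.exp 1 := Real.exp_le_exp.2 (by norm_num)
      have := Real.exp_one_lt_d9
      linarith
    have e1 : Real.sqrt (18 * t) = 3 * v := by
      rw [hv, show (18:ℝ) * t = 3 ^ 2 * (2 * t) by ring,
        Real.sqrt_mul (show (0:ℝ) ≤ 3 ^ 2 by norm_num) (2 * t),
        Real.sqrt_sq (show (0:ℝ) ≤ 3 by norm_num)]
    have e2 : Real.sqrt (2 ^ 2 * (4 * Real.pi * t)) = 2 * Real.sqrt (4 * Real.pi * t) := by
      rw [Real.sqrt_mul (show (0:ℝ) ≤ 2 ^ 2 by norm_num) (4 * Real.pi * t),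
        Real.sqrt_sq (show (0:ℝ) ≤ 2 by norm_num)]
    have e3 : Real.sqrt (18 * t) ≤ Real.sqrt (2 ^ 2 * (4 * Real.pi * t)) := by
      apply Real.sqrt_le_sqrt
      nlinarith [Real.pi_gt_three]
    nlinarith [hv0.le, e1, e2, e3]
  -- assemble
  have hexpa : (0:ℝ) ≤ Real.exp (-a ^ 2 / (16 * t)) := (Real.exp_pos _).le
  have hc0 : (0:ℝ) ≤ (Real.sqrt (4 * Real.pi * t))⁻¹ := inv_nonneg.2 hpisqrt.le
  have step1 : (Real.sqrt (4 * Real.pi * t))⁻¹ * (Real.exp (-s ^ 2 / (4 * t)) * (2 * |s|) / (4 * t))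
      = (Real.sqrt (4 * Real.pi * t))⁻¹ / (2 * t) * (|s| * Real.exp (-s ^ 2 / (4 * t))) := by
    field_simp
    ring
  rw [step1]
  have step2 : (Real.sqrt (4 * Real.pi * t))⁻¹ / (2 * t) * (|s| * Real.exp (-s ^ 2 / (4 * t)))
      ≤ (Real.sqrt (4 * Real.pi * t))⁻¹ / (2 * t) * (v * Real.exp (-s ^ 2 / (8 * t))) :=
    mul_le_mul_of_nonneg_left hiii (by positivity)
  have step3 : (Real.sqrt (4 * Real.pi * t))⁻¹ / (2 * t) * (v * Real.exp (-s ^ 2 / (8 * t)))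
      ≤ (Real.sqrt (4 * Real.pi * t))⁻¹ / (2 * t) * (v * (Real.exp (1/8 : ℝ) * Real.exp (-a ^ 2 / (16 * t)))) := by
    apply mul_le_mul_of_nonneg_left (mul_le_mul_of_nonneg_left hii hv0.le) (by positivity)
  have step4 : (Real.sqrt (4 * Real.pi * t))⁻¹ / (2 * t) * (v * (Real.exp (1/8 : ℝ) * Real.exp (-a ^ 2 / (16 * t))))
      ≤ (1 / t) * Real.exp (-a ^ 2 / (16 * t)) := by
    have hcc : (Real.sqrt (4 * Real.pi * t))⁻¹ * (Real.exp (1/8 : ℝ) * v) ≤ 2 := by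
      calc (Real.sqrt (4 * Real.pi * t))⁻¹ * (Real.exp (1/8 : ℝ) * v)
          ≤ (Real.sqrt (4 * Real.pi * t))⁻¹ * (2 * Real.sqrt (4 * Real.pi * t)) :=
            mul_le_mul_of_nonneg_left hcoef hc0
        _ = 2 := by field_simp
    have expand : (Real.sqrt (4 * Real.pi * t))⁻¹ / (2 * t) * (v * (Real.exp (1/8 : ℝ) * Real.exp (-a ^ 2 / (16 * t))))
        = ((Real.sqrt (4 * Real.pi * t))⁻¹ * (Real.exp (1/8 : ℝ) * v)) * (Real.exp (-a ^ 2 / (16 * t)) / (2 * t)) := by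
      ring
    rw [expand]
    calc ((Real.sqrt (4 * Real.pi * t))⁻¹ * (Real.exp (1/8 : ℝ) * v)) * (Real.exp (-a ^ 2 / (16 * t)) / (2 * t))
        ≤ 2 * (Real.exp (-a ^ 2 / (16 * t)) / (2 * t)) := by
          apply mul_le_mul_of_nonneg_right hcc (by positivity)
      _ = (1 / t) * Real.exp (-a ^ 2 / (16 * t)) := by
          field_simp
  linarith

lemma G_diff_le {t a b : ℝ} (ht : 0 < t) (hab : (a - b) ^ 2 ≤ t) :
    |G t a - G t b| ≤ |a - b| * ((1 / t) * Real.exp (-a ^ 2 / (16 * t))) := by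
  have hmvt := Convex.norm_image_sub_le_of_norm_hasDerivWithin_le
    (f := fun s => G t s)
    (f' := fun s => (Real.sqrt (4 * Real.pi * t))⁻¹ * (Real.exp (-s ^ 2 / (4 * t)) * (-(2 * s) / (4 * t))))
    (s := Set.uIcc a b) (x := b) (y := a)
    (C := (1 / t) * Real.exp (-a ^ 2 / (16 * t)))
    (fun s _ => (hasDerivAt_G s).hasDerivWithinAt)
    (fun s hsmem => by
      have := deriv_G_bound ht hab hsmem
      rw [Real.norm_eq_abs]
      calc |(Real.sqrt (4 * Real.pi * t))⁻¹ * (Real.exp (-s ^ 2 / (4 * t)) * (-(2 * s) / (4 * t)))|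
          = (Real.sqrt (4 * Real.pi * t))⁻¹ * (Real.exp (-s ^ 2 / (4 * t)) * (2 * |s|) / (4 * t)) := by
            rw [abs_mul, abs_mul, abs_div, abs_neg]
            rw [abs_of_nonneg (inv_nonneg.2 (Real.sqrt_nonneg _)),
              abs_of_nonneg (Real.exp_pos _).le, abs_of_nonneg (by positivity : (0:ℝ) ≤ 4 * t),
              abs_mul, abs_of_nonneg (by norm_num : (0:ℝ) ≤ (2:ℝ))]
            ring
        _ ≤ (1 / t) * Real.exp (-a ^ 2 / (16 * t)) := this)
    (convex_uIcc a b) Set.right_mem_uIcc Set.left_mem_uIcc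
  rw [Real.norm_eq_abs, Real.norm_eq_abs] at hmvt
  calc |G t a - G t b| ≤ (1 / t) * Real.exp (-a ^ 2 / (16 * t)) * |a - b| := hmvt
    _ = |a - b| * ((1 / t) * Real.exp (-a ^ 2 / (16 * t))) := by ring

lemma p_sub_le {t x y w : ℝ} (ht : 0 < t) (hxy : (x - y) ^ 2 ≤ t) :
    |p t x w - p t y w| ≤ |x - y| * (1 / t) * Ks (16 * t) x w := by
  have hsx := summable_G ht (x - w)
  have hsy := summable_G ht (y - w)
  have hKsum : Summable (fun n : ℤ =>
      |x - y| * ((1 / t) * Real.exp (-(x - w + 2 * (n : ℝ)) ^ 2 / (16 * t)))) :=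
    (((summable_exp_sq (by linarith : (0:ℝ) < 16 * t) (x - w)).mul_left _).mul_left _)
  have hterm : ∀ n : ℤ, |G t (x - w + 2 * (n : ℝ)) - G t (y - w + 2 * (n : ℝ))|
      ≤ |x - y| * ((1 / t) * Real.exp (-(x - w + 2 * (n : ℝ)) ^ 2 / (16 * t))) := by
    intro n
    have hab : (x - w + 2 * (n : ℝ) - (y - w + 2 * (n : ℝ))) ^ 2 ≤ t := by
      rw [show x - w + 2 * (n : ℝ) - (y - w + 2 * (n : ℝ)) = x - y by ring]; exact hxy
    have h := G_diff_le ht hab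
    rwa [show x - w + 2 * (n : ℝ) - (y - w + 2 * (n : ℝ)) = x - y by ring] at h
  have habs : Summable (fun n : ℤ =>
      |G t (x - w + 2 * (n : ℝ)) - G t (y - w + 2 * (n : ℝ))|) :=
    Summable.of_nonneg_of_le (fun n => abs_nonneg _) hterm hKsum
  unfold p
  rw [← hsx.tsum_sub hsy]
  have h1 : |∑' n : ℤ, (G t (x - w + 2 * (n : ℝ)) - G t (y - w + 2 * (n : ℝ)))|
      ≤ ∑' n : ℤ, |G t (x - w + 2 * (n : ℝ)) - G t (y - w + 2 * (n : ℝ))| := by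
    simpa [Real.norm_eq_abs] using norm_tsum_le_tsum_norm
      (f := fun n : ℤ => G t (x - w + 2 * (n : ℝ)) - G t (y - w + 2 * (n : ℝ)))
      (by simpa [Real.norm_eq_abs] using habs)
  calc |∑' n : ℤ, (G t (x - w + 2 * (n : ℝ)) - G t (y - w + 2 * (n : ℝ)))|
      ≤ ∑' n : ℤ, |G t (x - w + 2 * (n : ℝ)) - G t (y - w + 2 * (n : ℝ))| := h1
    _ ≤ ∑' n : ℤ, |x - y| * ((1 / t) * Real.exp (-(x - w + 2 * (n : ℝ)) ^ 2 / (16 * t))) :=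
        Summable.tsum_le_tsum hterm habs hKsum
    _ = |x - y| * (1 / t) * Ks (16 * t) x w := by
        rw [tsum_mul_left]
        unfold Ks
        rw [tsum_mul_left, mul_assoc]

lemma integral_Ks_le {c x : ℝ} (hc : 0 < c) (hx : x ∈ Set.Icc (-1:ℝ) 1) :
    ∫ w in Set.Ioc (-1:ℝ) 1, Ks c x w ≤ Real.sqrt (Real.pi * c) := by
  set g : ℝ → ℝ := fun u => Real.exp (-(1/c) * u ^ 2) with hg
  have hgint : Integrable g := integrable_exp_neg_mul_sq (by positivity)
  have hgval : ∫ u, g u = Real.sqrt (Real.pi * c) := by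
    rw [hg, integral_gaussian, show Real.pi / (1/c) = Real.pi * c by field_simp]
  have hgc : Continuous g := by
    rw [hg]; continuity
  set S : ℕ → ℝ → ℝ := fun k w => ∑ n ∈ Finset.Icc (-(k:ℤ)) (k:ℤ),
    Real.exp (-(x - w + 2*(n:ℝ))^2 / c) with hS
  have hpartial : ∀ k : ℕ, ∫ w in Set.Ioc (-1:ℝ) 1, S k w ≤ Real.sqrt (Real.pi * c) := by
    intro k
    have hcont : ∀ n : ℤ, Continuous (fun w : ℝ => Real.exp (-(x - w + 2*(n:ℝ))^2 / c)) := by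
      intro n; continuity
    have hsum : ∫ w in Set.Ioc (-1:ℝ) 1, S k w
        = ∑ n ∈ Finset.Icc (-(k:ℤ)) (k:ℤ), ∫ w in Set.Ioc (-1:ℝ) 1,
            Real.exp (-(x - w + 2*(n:ℝ))^2 / c) :=
      integral_finset_sum _ (fun n _ => (hcont n).integrableOn_Ioc)
    have hterm : ∀ n : ℤ, (∫ w in Set.Ioc (-1:ℝ) 1, Real.exp (-(x - w + 2*(n:ℝ))^2 / c))
        = ∫ u in Set.Ioc (x + 2*(n:ℝ) - 1) (x + 2*(n:ℝ) + 1), g u := by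
      intro n
      rw [← intervalIntegral.integral_of_le (by norm_num : (-1:ℝ) ≤ 1),
          ← intervalIntegral.integral_of_le (by linarith : x + 2*(n:ℝ) - 1 ≤ x + 2*(n:ℝ) + 1)]
      have heq : (fun w : ℝ => Real.exp (-(x - w + 2*(n:ℝ))^2 / c))
          = fun w => g ((x + 2*(n:ℝ)) - w) := by
        funext w
        rw [hg]
        have harg : (x + 2*(n:ℝ)) - w = x - w + 2*(n:ℝ) := by ring
        rw [harg]
        congr 1
        rw [neg_mul, one_div_mul_eq_div, neg_div]
      rw [heq, intervalIntegral.integral_comp_sub_left g (x + 2*(n:ℝ))]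
      norm_num
    rw [hsum, Finset.sum_congr rfl (fun n _ => hterm n)]
    -- sum of disjoint set integrals ≤ total integral
    have hdisj : (↑(Finset.Icc (-(k:ℤ)) (k:ℤ)) : Set ℤ).Pairwise
        (Function.onFun Disjoint (fun n : ℤ => Set.Ioc (x + 2*(n:ℝ) - 1) (x + 2*(n:ℝ) + 1))) := by
      intro m _ n _ hmn
      rw [Function.onFun, Set.Ioc_disjoint_Ioc]
      rcases hmn.lt_or_gt with h | h
      · have hmn' : (m:ℝ) + 1 ≤ (n:ℝ) := by exact_mod_cast h
        exact le_trans (min_le_left _ _) (le_trans (by linarith) (le_max_right _ _))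
      · have hmn' : (n:ℝ) + 1 ≤ (m:ℝ) := by exact_mod_cast h
        exact le_trans (min_le_right _ _) (le_trans (by linarith) (le_max_left _ _))
    rw [← integral_biUnion_finset _ (fun n _ => measurableSet_Ioc) hdisj
      (fun n _ => hgint.integrableOn)]
    exact setIntegral_le_integral hgint (Filter.Eventually.of_forall (fun u => (Real.exp_pos _).le))
      |>.trans_eq hgval
  -- monotone convergence
  have hKsInt : IntegrableOn (fun w => Ks c x w) (Set.Ioc (-1:ℝ) 1) := by
    apply Integrable.mono' (integrable_const (3 + 2*Real.sqrt c))
    · exact ((measurable_Ks hc x).aestronglyMeasurable)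
    · filter_upwards [ae_restrict_mem measurableSet_Ioc] with w hw
      rw [Real.norm_eq_abs, abs_of_nonneg (Ks_nonneg _ _ _)]
      apply Ks_le hc
      obtain ⟨hx1, hx2⟩ := hx
      obtain ⟨hw1, hw2⟩ := hw
      rw [abs_le]; constructor <;> linarith
  have hSInt : ∀ k : ℕ, IntegrableOn (S k) (Set.Ioc (-1:ℝ) 1) := by
    intro k
    apply integrable_finset_sum
    intro n _
    exact Continuous.integrableOn_Ioc (by continuity)
  have hmono : ∀ w, Monotone (fun k => S k w) := by
    intro w k l hkl
    apply Finset.sum_le_sum_of_subset_of_nonneg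
    · apply Finset.Icc_subset_Icc
      · exact neg_le_neg (by exact_mod_cast hkl)
      · exact_mod_cast hkl
    · exact fun i _ _ => (Real.exp_pos _).le
  have htendsto := integral_tendsto_of_tendsto_of_monotone hSInt hKsInt
    (Filter.Eventually.of_forall hmono)
    (Filter.Eventually.of_forall (fun w => tendsto_partial_Ks hc x w))
  exact le_of_tendsto htendsto (Filter.Eventually.of_forall hpartial)

set_option maxHeartbeats 2000000 in
theorem heat_kernel_space_increment_L2 :
    ∃ C : ℝ, 0 ≤ C ∧ ∀ t x y : ℝ, 0 < t →
      x ∈ Set.Icc (-1 : ℝ) 1 → y ∈ Set.Icc (-1 : ℝ) 1 →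
      (∫ w in (-1 : ℝ)..1, (p t x w - p t y w) ^ 2)
        ≤ C * |x - y| / min t (Real.sqrt t) := by
  refine ⟨64, by norm_num, ?_⟩
  intro t x y ht hx hy
  set s := Real.sqrt t with hsdef
  have hst : 0 < s := Real.sqrt_pos.2 ht
  have hs2 : s * s = t := Real.mul_self_sqrt ht.le
  have hm : 0 < min t s := lt_min ht hst
  have h4t : (0:ℝ) < 4 * t := by linarith
  have h16t : (0:ℝ) < 16 * t := by linarith
  rw [intervalIntegral.integral_of_le (by norm_num : (-1:ℝ) ≤ 1)]
  set M : ℝ := 4 + 4 / s with hM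
  have hM0 : 0 < M := by positivity
  clear_value s M
  -- pointwise sup bound
  have habs : ∀ w ∈ Set.Ioc (-1:ℝ) 1, |p t x w - p t y w| ≤ M := by
    intro w hw
    have hxw : |x - w| ≤ 2 := by
      obtain ⟨a1,a2⟩ := hx; obtain ⟨b1,b2⟩ := hw; rw [abs_le]; constructor <;> linarith
    have hyw : |y - w| ≤ 2 := by
      obtain ⟨a1,a2⟩ := hy; obtain ⟨b1,b2⟩ := hw; rw [abs_le]; constructor <;> linarith
    have h1 := p_le ht hxw
    have h2 := p_le ht hyw
    rw [← hsdef] at h1 h2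
    have h3 := p_nonneg t x w
    have h4 := p_nonneg t y w
    have hdiv : (4:ℝ)/s = 2/s + 2/s := by ring
    have hposdiv : (0:ℝ) ≤ 2/s := by
      apply div_nonneg (by norm_num) hst.le
    rw [abs_le]
    constructor <;> [linarith; linarith]
  -- measurability of p in w
  have hpmeas : ∀ z : ℝ, Measurable (fun w => p t z w) := by
    intro z
    have heq : (fun w => p t z w) = fun w => (Real.sqrt (4*Real.pi*t))⁻¹ * Ks (4*t) z w :=
      funext (fun w => p_eq t z w)
    rw [heq]
    exact (measurable_Ks h4t z).const_mul _
  have hmeas : Measurable (fun w => (p t x w - p t y w)^2) :=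
    ((hpmeas x).sub (hpmeas y)).pow_const 2
  have hIntSq : IntegrableOn (fun w => (p t x w - p t y w)^2) (Set.Ioc (-1:ℝ) 1) := by
    apply Integrable.mono' (integrable_const (M^2))
    · exact hmeas.aestronglyMeasurable
    · filter_upwards [ae_restrict_mem measurableSet_Ioc] with w hw
      rw [Real.norm_eq_abs, abs_of_nonneg (sq_nonneg _)]
      have h1 := habs w hw
      nlinarith [abs_nonneg (p t x w - p t y w), sq_abs (p t x w - p t y w)]
  -- integrability of p on the interval
  have hIntp : ∀ z ∈ Set.Icc (-1:ℝ) 1, IntegrableOn (fun w => p t z w) (Set.Ioc (-1:ℝ) 1) := by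
    intro z hz
    apply Integrable.mono' (integrable_const (2 + 2/Real.sqrt t))
    · exact (hpmeas z).aestronglyMeasurable
    · filter_upwards [ae_restrict_mem measurableSet_Ioc] with w hw
      rw [Real.norm_eq_abs, abs_of_nonneg (p_nonneg t z w)]
      apply p_le ht
      obtain ⟨a1,a2⟩ := hz; obtain ⟨b1,b2⟩ := hw; rw [abs_le]; constructor <;> linarith
  -- integral of p ≤ 1
  have hpint : ∀ z ∈ Set.Icc (-1:ℝ) 1, (∫ w in Set.Ioc (-1:ℝ) 1, p t z w) ≤ 1 := by
    intro z hz
    have heq : (fun w => p t z w) = fun w => (Real.sqrt (4*Real.pi*t))⁻¹ * Ks (4*t) z w :=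
      funext (fun w => p_eq t z w)
    rw [heq, MeasureTheory.integral_const_mul]
    have hK := integral_Ks_le h4t hz
    have hs4 : Real.sqrt (Real.pi * (4*t)) = Real.sqrt (4*Real.pi*t) := by
      rw [show Real.pi * (4*t) = 4*Real.pi*t by ring]
    have hpisqrt : (0:ℝ) < Real.sqrt (4*Real.pi*t) := Real.sqrt_pos.2 (by positivity)
    calc (Real.sqrt (4*Real.pi*t))⁻¹ * ∫ w in Set.Ioc (-1:ℝ) 1, Ks (4*t) z w
        ≤ (Real.sqrt (4*Real.pi*t))⁻¹ * Real.sqrt (Real.pi * (4*t)) :=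
          mul_le_mul_of_nonneg_left hK (inv_nonneg.2 hpisqrt.le)
      _ = 1 := by rw [hs4, inv_mul_cancel₀ (ne_of_gt hpisqrt)]
  rcases le_total s |x - y| with hcase | hcase
  · -- case |x-y| ≥ √t : crude bound
    have hmono : ∫ w in Set.Ioc (-1:ℝ) 1, (p t x w - p t y w)^2
        ≤ ∫ w in Set.Ioc (-1:ℝ) 1, M * (p t x w + p t y w) := by
      apply setIntegral_mono_on hIntSq ?_ measurableSet_Ioc ?_
      · exact (((hIntp x hx).add (hIntp y hy)).const_mul M)
      · intro w hw
        have h1 := habs w hw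
        have h5 : |p t x w - p t y w| ≤ p t x w + p t y w := by
          have := abs_sub (p t x w) (p t y w)
          have h3 := p_nonneg t x w
          have h4 := p_nonneg t y w
          rw [abs_le]; constructor <;> nlinarith [abs_nonneg (p t x w - p t y w)]
        nlinarith [abs_nonneg (p t x w - p t y w), sq_abs (p t x w - p t y w)]
    have hval : ∫ w in Set.Ioc (-1:ℝ) 1, M * (p t x w + p t y w) ≤ M * 2 := by
      rw [MeasureTheory.integral_const_mul]
      apply mul_le_mul_of_nonneg_left ?_ hM0.le
      rw [integral_add (hIntp x hx) (hIntp y hy)]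
      linarith [hpint x hx, hpint y hy]
    have harith : M * 2 ≤ 64 * |x - y| / min t s := by
      rcases le_total t s with h | h
      · rw [min_eq_left h, le_div_iff₀ ht]
        have hs1 : s ≤ 1 := by nlinarith
        have hts : t / s = s := by rw [← hs2]; field_simp
        have hexp : M * 2 * t = 8 * t + 8 * (t / s) := by
          rw [hM]; field_simp; ring
        rw [hexp, hts]
        nlinarith [abs_nonneg (x - y)]
      · rw [min_eq_right h, le_div_iff₀ hst]
        have hs1 : 1 ≤ s := by nlinarith
        have hexp : M * 2 * s = 8 * s + 8 := by
          rw [hM]; field_simp; ring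
        rw [hexp]
        nlinarith [abs_nonneg (x - y)]
    exact le_trans (hmono.trans hval) harith
  · -- case |x-y| ≤ √t : derivative bound
    have hxy2 : (x - y)^2 ≤ t := by
      nlinarith [abs_nonneg (x - y), sq_abs (x - y)]
    set B : ℝ := M * (|x - y| * (1/t)) with hB
    have hB0 : 0 ≤ B := by
      rw [hB]
      apply mul_nonneg hM0.le (mul_nonneg (abs_nonneg _) (by positivity))
    clear_value B
    have hmono : ∫ w in Set.Ioc (-1:ℝ) 1, (p t x w - p t y w)^2
        ≤ ∫ w in Set.Ioc (-1:ℝ) 1, B * Ks (16*t) x w := by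
      apply setIntegral_mono_on hIntSq ?_ measurableSet_Ioc ?_
      · apply Integrable.mono' (integrable_const (B * (3 + 2*Real.sqrt (16*t))))
        · exact ((measurable_Ks h16t x).const_mul B).aestronglyMeasurable
        · filter_upwards [ae_restrict_mem measurableSet_Ioc] with w hw
          rw [Real.norm_eq_abs, abs_of_nonneg (mul_nonneg hB0 (Ks_nonneg _ _ _))]
          apply mul_le_mul_of_nonneg_left ?_ hB0
          apply Ks_le h16t
          obtain ⟨a1,a2⟩ := hx; obtain ⟨b1,b2⟩ := hw; rw [abs_le]; constructor <;> linarith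
      · intro w hw
        have h1 := habs w hw
        have h2 := p_sub_le ht hxy2 (w := w)
        have hKnn := Ks_nonneg (16*t) x w
        calc (p t x w - p t y w)^2 = |p t x w - p t y w| * |p t x w - p t y w| := by
              rw [← sq_abs]; ring
          _ ≤ M * (|x - y| * (1/t) * Ks (16*t) x w) := by
              apply mul_le_mul h1 h2 (abs_nonneg _) hM0.le
          _ = B * Ks (16*t) x w := by rw [hB]; ring
    have hKint : ∫ w in Set.Ioc (-1:ℝ) 1, Ks (16*t) x w ≤ 8 * s := by
      have h1 := integral_Ks_le h16t hx
      have h2 : Real.sqrt (Real.pi * (16*t)) ≤ 8 * s := by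
        have e1 : (8:ℝ) * s = Real.sqrt (64 * t) := by
          rw [hsdef, show (64:ℝ) * t = 8^2 * t by ring,
            Real.sqrt_mul (show (0:ℝ) ≤ 8^2 by norm_num) t,
            Real.sqrt_sq (show (0:ℝ) ≤ 8 by norm_num)]
        rw [e1]
        apply Real.sqrt_le_sqrt
        nlinarith [Real.pi_le_four]
      linarith
    have hval : ∫ w in Set.Ioc (-1:ℝ) 1, B * Ks (16*t) x w ≤ B * (8 * s) := by
      rw [MeasureTheory.integral_const_mul]
      apply mul_le_mul_of_nonneg_left hKint hB0
    have harith : B * (8 * s) ≤ 64 * |x - y| / min t s := by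
      have hexp : B * (8 * s) = |x - y| * ((32 * s + 32) / t) := by
        rw [hB, hM]; field_simp; ring
      have hrhs : 64 * |x - y| / min t s = |x - y| * (64 / min t s) := by ring
      rw [hexp, hrhs]
      apply mul_le_mul_of_nonneg_left ?_ (abs_nonneg _)
      rcases le_total t s with h | h
      · rw [min_eq_left h, div_le_div_iff₀ ht ht]
        have hs1 : s ≤ 1 := by nlinarith [hs2, hst]
        nlinarith [hs2, hst]
      · rw [min_eq_right h, div_le_div_iff₀ ht hst]
        have hs1 : 1 ≤ s := by nlinarith [hs2, hst]
        nlinarith [hs2, hst]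
    exact le_trans (hmono.trans hval) harith
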